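/- arXiv:2003.09999 — 4 statements merged into one kernel-verified Lean document; each statement's English description precedes it below -/
import Mathlib

section
/- Let μ : ℂ² ⊗ ℂ² → ℂ² be a linear map and e ∈ ℂ², and let M ⊆ ℂ² be a set of states containing e such that μ(e ⊗ v) = v = μ(v ⊗ e) for all v ∈ M and μ restricted to M is an associative multiplication landing in M. If the elements of M span all of ℂ², then μ(a ⊗ b) = μ(b ⊗ a) for all a, b ∈ M; that is, the monoid (M, μ) is commutative. -/
/-- let `μ` be a bilinear multiplication on `ℂ²`, `M ⊆ ℂ²` a set of states
containing the unit `e`, with `μ(e ⊗ v) = v = μ(v ⊗ e)` for `v ∈ M`, `μ` restricted to `M`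
associative and landing in `M`.  If the elements of `M` span all of `ℂ²`, then
`μ(a ⊗ b) = μ(b ⊗ a)` for all `a, b ∈ M`. -/
theorem monoid_over_qubit_spanning_commutative
    (μ : (ℂ × ℂ) →ₗ[ℂ] (ℂ × ℂ) →ₗ[ℂ] (ℂ × ℂ)) (e : ℂ × ℂ) (M : Set (ℂ × ℂ))
    (he : e ∈ M)
    (hunit : ∀ v ∈ M, μ e v = v ∧ μ v e = v)
    (hclosed : ∀ a ∈ M, ∀ b ∈ M, μ a b ∈ M)
    (hassoc : ∀ a ∈ M, ∀ b ∈ M, ∀ c ∈ M, μ (μ a b) c = μ a (μ b c))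
    (hspan : Submodule.span ℂ M = ⊤) :
    ∀ a ∈ M, ∀ b ∈ M, μ a b = μ b a := by
  -- extend the unit laws to all of ℂ² by linearity
  have lu : ∀ v : ℂ × ℂ, μ e v = v := by
    have : μ e = LinearMap.id := by
      apply LinearMap.ext_on hspan
      intro v hv
      simpa using (hunit v hv).1
    intro v; rw [this]; rfl
  have ru : ∀ v : ℂ × ℂ, μ v e = v := by
    have : μ.flip e = LinearMap.id := by
      apply LinearMap.ext_on hspan
      intro v hv
      simpa using (hunit v hv).2
    intro v
    have := congrArg (fun f => f v) this
    simpa using this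
  have he0 : e ≠ 0 := by
    intro h
    have h1 := lu (1, 0)
    rw [h] at h1
    simp [Prod.ext_iff] at h1
  -- main argument
  intro a _ b _
  by_cases h : ∃ c : ℂ, c • e = a
  · obtain ⟨c, rfl⟩ := h
    simp [lu, ru]
  · have hind : LinearIndependent ℂ ![e, a] :=
      (LinearIndependent.pair_iff' he0).2 (by push_neg at h; exact h)
    have hcard : Fintype.card (Fin 2) = Module.finrank ℂ (ℂ × ℂ) := by simp
    have htop := hind.span_eq_top_of_card_eq_finrank hcard
    have hb : b ∈ Submodule.span ℂ {e, a} := by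
      have : Set.range ![e, a] = {e, a} := by
        simp [Matrix.range_cons, Matrix.range_empty]; exact Set.pair_comm a e
      rw [← this, htop]; trivial
    obtain ⟨x, y, rfl⟩ := Submodule.mem_span_pair.1 hb
    simp [lu, ru, map_add, map_smul]
end

section
/- There is no monoid over ℂ² (a set M of distinct vectors in ℂ² with an associative bilinear multiplication μ : ℂ² ⊗ ℂ² → ℂ² having a unit in M) whose multiplicative structure is isomorphic as a monoid to the group of unit quaternions. -/
open Quaternion

/-- Commutativity of any monoid over ℂ². -/
lemma aux_comm (M : Set (ℂ × ℂ)) (μ : (ℂ × ℂ) →ₗ[ℂ] (ℂ × ℂ) →ₗ[ℂ] (ℂ × ℂ)) (e : ℂ × ℂ)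
    (he : e ∈ M) (hunit : ∀ v ∈ M, μ e v = v ∧ μ v e = v)
    (a : ℂ × ℂ) (ha : a ∈ M) (b : ℂ × ℂ) (hb : b ∈ M) : μ a b = μ b a := by
  by_cases hae : ∃ c : ℂ, a = c • e
  · obtain ⟨c, rfl⟩ := hae
    simp only [map_smul, LinearMap.smul_apply]
    rw [(hunit b hb).1, (hunit b hb).2]
  · have he0 : e ≠ 0 := by
      rintro rfl
      exact hae ⟨0, by simpa using ((hunit a ha).1).symm⟩
    have hind : LinearIndependent ℂ ![e, a] := by
      rw [LinearIndependent.pair_iff' he0]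
      intro c hc
      exact hae ⟨c, hc.symm⟩
    have hspan : Submodule.span ℂ (Set.range ![e, a]) = ⊤ :=
      hind.span_eq_top_of_card_eq_finrank (by simp)
    have hb' : b ∈ Submodule.span ℂ ({e, a} : Set (ℂ × ℂ)) := by
      rw [show ({e, a} : Set (ℂ × ℂ)) = Set.range ![e, a] by
        simp [Matrix.range_cons, Set.pair_comm], hspan]
      trivial
    obtain ⟨c, d, hcd⟩ := Submodule.mem_span_pair.1 hb'
    subst hcd
    simp only [map_add, map_smul, LinearMap.add_apply, LinearMap.smul_apply]
    rw [(hunit a ha).1, (hunit a ha).2]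

/-- there is no monoid over `ℂ²` (a set `M` of vectors in `ℂ²` with an
associative bilinear multiplication `μ` having a unit `e ∈ M`) whose multiplicative
structure is isomorphic as a monoid to the group of unit quaternions. -/
theorem no_monoid_over_qubit_iso_unit_quaternions :
    ¬ ∃ (M : Set (ℂ × ℂ)) (μ : (ℂ × ℂ) →ₗ[ℂ] (ℂ × ℂ) →ₗ[ℂ] (ℂ × ℂ)) (e : ℂ × ℂ)
        (f : Metric.sphere (0 : ℍ[ℝ]) 1 → ℂ × ℂ),
      e ∈ M ∧
      (∀ v ∈ M, μ e v = v ∧ μ v e = v) ∧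
      (∀ a ∈ M, ∀ b ∈ M, μ a b ∈ M) ∧
      (∀ a ∈ M, ∀ b ∈ M, ∀ c ∈ M, μ (μ a b) c = μ a (μ b c)) ∧
      Function.Injective f ∧
      Set.range f = M ∧
      f 1 = e ∧
      (∀ q q' : Metric.sphere (0 : ℍ[ℝ]) 1, f (q * q') = μ (f q) (f q')) := by
  rintro ⟨M, μ, e, f, he, hunit, -, -, hinj, hrange, -, hmul⟩
  have hnorm : ∀ q : ℍ[ℝ], normSq q = 1 → q ∈ Metric.sphere (0 : ℍ[ℝ]) 1 := by
    intro q hq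
    have h1 : ‖q‖ * ‖q‖ = 1 := by rw [← Quaternion.normSq_eq_norm_mul_self, hq]
    have : ‖q‖ = 1 := by nlinarith [norm_nonneg q]
    simpa [Metric.mem_sphere, dist_zero_right] using this
  set qi : Metric.sphere (0 : ℍ[ℝ]) 1 := ⟨⟨0,1,0,0⟩, hnorm _ ((Quaternion.normSq_def' _).trans (by norm_num))⟩
  set qj : Metric.sphere (0 : ℍ[ℝ]) 1 := ⟨⟨0,0,1,0⟩, hnorm _ ((Quaternion.normSq_def' _).trans (by norm_num))⟩
  have hmem : ∀ q, f q ∈ M := fun q => hrange ▸ Set.mem_range_self q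
  have : f (qi * qj) = f (qj * qi) := by
    rw [hmul, hmul, aux_comm M μ e he hunit _ (hmem qi) _ (hmem qj)]
  have h2 := hinj this
  have h3 : (qi : ℍ[ℝ]) * qj = (qj : ℍ[ℝ]) * qi := congrArg Subtype.val h2
  simp only [qi, qj, Quaternion.ext_iff, Quaternion.imK_mul] at h3
  have h4 := (Quaternion.imK_mul _ _).symm.trans (h3.2.2.2.trans (Quaternion.imK_mul _ _))
  norm_num at h4
end

section
/- Let α₁, α₂ be real, set x⁺ = (α₁+α₂)/2, x⁻ = x⁺ − α₂, z = −sin x⁺ + i cos x⁻ and z' = cos x⁺ − i sin x⁻ (complex numbers, with z, z' not both zero and z, z' ≠ 0). Define β₁ = arg z + arg z', β₂ = 2 arg(i + |z|/|z'|), β₃ = arg z − arg z'. Then with H = (i+k)/√2, the quaternion identity (α₁,z-axis) · H · (α₂,z-axis) = H · (β₁,z-axis) · H · (β₂,z-axis) · H · (β₃,z-axis) · H holds, where (θ, z-axis) denotes cos(θ/2) + k sin(θ/2). -/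
open Quaternion Real Complex

/-- The quaternion `cos (θ/2) + k sin (θ/2)` (a Z-axis rotation by `θ`). -/
noncomputable def Zrot (θ : ℝ) : ℍ[ℝ] := ⟨Real.cos (θ / 2), 0, 0, Real.sin (θ / 2)⟩

/-- The Hadamard quaternion `H = (i + k)/√2`. -/
noncomputable def Hq : ℍ[ℝ] := ⟨0, 1 / Real.sqrt 2, 0, 1 / Real.sqrt 2⟩

/-- X-axis rotation quaternion. -/
noncomputable def Xrot (θ : ℝ) : ℍ[ℝ] := ⟨Real.cos (θ / 2), Real.sin (θ / 2), 0, 0⟩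

lemma HZ (θ : ℝ) : Hq * Zrot θ = Xrot θ * Hq := by
  ext <;> simp only [Quaternion.re_mul, Quaternion.imI_mul, Quaternion.imJ_mul,
    Quaternion.imK_mul] <;> simp [Zrot, Hq, Xrot] <;> ring

lemma HH : Hq * Hq = -1 := by
  have h2 : Real.sqrt 2 ^ 2 = 2 := Real.sq_sqrt (by norm_num)
  ext <;> simp only [Quaternion.re_mul, Quaternion.imI_mul, Quaternion.imJ_mul,
    Quaternion.imK_mul] <;> simp [Hq] <;> field_simp <;> nlinarith [h2]

lemma XZX (p b q : ℝ) : Xrot p * Zrot b * Xrot q =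
    ⟨Real.cos (b/2) * Real.cos ((p+q)/2), Real.cos (b/2) * Real.sin ((p+q)/2),
     -(Real.sin (b/2) * Real.sin ((p-q)/2)), Real.sin (b/2) * Real.cos ((p-q)/2)⟩ := by
  have h1 : (p+q)/2 = p/2 + q/2 := by ring
  have h2 : (p-q)/2 = p/2 - q/2 := by ring
  ext <;>
    simp only [Quaternion.re_mul, Quaternion.imI_mul, Quaternion.imJ_mul,
      Quaternion.imK_mul] <;> simp [Xrot, Zrot, h1, h2, Real.cos_add, Real.sin_add, Real.cos_sub, Real.sin_sub] <;>
    ring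

lemma ZHZ (α₁ α₂ : ℝ) : Zrot α₁ * Hq * Zrot α₂ =
    ⟨-Real.sin ((α₁+α₂)/2) / Real.sqrt 2, Real.cos ((α₁-α₂)/2) / Real.sqrt 2,
     Real.sin ((α₁-α₂)/2) / Real.sqrt 2, Real.cos ((α₁+α₂)/2) / Real.sqrt 2⟩ := by
  have h1 : (α₁+α₂)/2 = α₁/2 + α₂/2 := by ring
  have h2 : (α₁-α₂)/2 = α₁/2 - α₂/2 := by ring
  ext <;>
    simp only [Quaternion.re_mul, Quaternion.imI_mul, Quaternion.imJ_mul,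
      Quaternion.imK_mul] <;> simp [Zrot, Hq, h1, h2, Real.cos_add, Real.sin_add, Real.cos_sub, Real.sin_sub] <;>
    ring

lemma beta2_cs (A B : ℝ) (hB : 0 < B) (hAB : A^2 + B^2 = 2) :
    Real.cos (Complex.arg (Complex.I + ((A/B : ℝ) : ℂ))) = A / Real.sqrt 2 ∧
    Real.sin (Complex.arg (Complex.I + ((A/B : ℝ) : ℂ))) = B / Real.sqrt 2 := by
  set w : ℂ := Complex.I + ((A/B : ℝ) : ℂ) with hw
  have hwre : w.re = A / B := by simp [hw]
  have hwim : w.im = 1 := by simp [hw]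
  have hw0 : w ≠ 0 := by
    intro h; rw [h] at hwim; simp at hwim
  have habs : ‖w‖ = Real.sqrt 2 / B := by
    rw [Complex.norm_def, Complex.normSq_apply, hwre, hwim]
    rw [show A/B * (A/B) + 1 * 1 = 2 / B^2 by field_simp; nlinarith]
    rw [Real.sqrt_div (by norm_num : (0:ℝ) ≤ 2), Real.sqrt_sq hB.le]
  have h2 : Real.sqrt 2 > 0 := by positivity
  constructor
  · rw [Complex.cos_arg hw0, hwre, habs]; field_simp
  · rw [Complex.sin_arg w, hwim, habs]; field_simp

lemma RHS_eq (β₁ β₂ β₃ : ℝ) :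
    Hq * Zrot β₁ * Hq * Zrot β₂ * Hq * Zrot β₃ * Hq = Xrot β₁ * Zrot β₂ * Xrot β₃ := by
  calc Hq * Zrot β₁ * Hq * Zrot β₂ * Hq * Zrot β₃ * Hq
      = (Xrot β₁ * Hq) * Hq * Zrot β₂ * Hq * Zrot β₃ * Hq := by rw [HZ]
    _ = Xrot β₁ * (Hq * Hq) * Zrot β₂ * Hq * Zrot β₃ * Hq := by simp only [mul_assoc]
    _ = -(Xrot β₁ * Zrot β₂ * (Hq * Zrot β₃) * Hq) := by rw [HH]; simp only [mul_assoc]; simp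
    _ = -(Xrot β₁ * Zrot β₂ * (Xrot β₃ * Hq) * Hq) := by rw [HZ]
    _ = -(Xrot β₁ * Zrot β₂ * Xrot β₃ * (Hq * Hq)) := by simp only [mul_assoc]
    _ = Xrot β₁ * Zrot β₂ * Xrot β₃ := by rw [HH]; simp

/-- the quaternionic Euler-angle identity behind the ZX rule (EU'):
with `x⁺ = (α₁+α₂)/2`, `x⁻ = x⁺ − α₂`, `z = −sin x⁺ + i cos x⁻`,
`z' = cos x⁺ − i sin x⁻` both nonzero, `β₁ = arg z + arg z'`,
`β₂ = 2 arg(i + |z|/|z'|)`, `β₃ = arg z − arg z'`, we have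
`(α₁,z)·H·(α₂,z) = H·(β₁,z)·H·(β₂,z)·H·(β₃,z)·H`. -/
theorem ZQ_EU_quaternion_identity (α₁ α₂ xp xm β₁ β₂ β₃ : ℝ) (z z' : ℂ)
    (hxp : xp = (α₁ + α₂) / 2) (hxm : xm = xp - α₂)
    (hz : z = -Real.sin xp + Real.cos xm * Complex.I)
    (hz' : z' = Real.cos xp - Real.sin xm * Complex.I)
    (hz0 : z ≠ 0) (hz'0 : z' ≠ 0)
    (hβ₁ : β₁ = z.arg + z'.arg)
    (hβ₂ : β₂ = 2 * Complex.arg (Complex.I + ((‖z‖ / ‖z'‖ : ℝ) : ℂ)))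
    (hβ₃ : β₃ = z.arg - z'.arg) :
    Zrot α₁ * Hq * Zrot α₂ =
      Hq * Zrot β₁ * Hq * Zrot β₂ * Hq * Zrot β₃ * Hq := by
  set A := ‖z‖ with hA'
  set B := ‖z'‖ with hB'
  have hA : 0 < A := by simpa [hA'] using norm_pos_iff.mpr hz0
  have hB : 0 < B := by simpa [hB'] using norm_pos_iff.mpr hz'0
  have hzre : z.re = -Real.sin xp := by rw [hz]; simp [Complex.sin_ofReal_re, Complex.cos_ofReal_re]
  have hzim : z.im = Real.cos xm := by rw [hz]; simp [Complex.sin_ofReal_re, Complex.cos_ofReal_re]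
  have hz're : z'.re = Real.cos xp := by rw [hz']; simp [Complex.sin_ofReal_re, Complex.cos_ofReal_re]
  have hz'im : z'.im = -Real.sin xm := by rw [hz']; simp [Complex.sin_ofReal_re, Complex.cos_ofReal_re]
  have hAB : A^2 + B^2 = 2 := by
    rw [hA', hB', Complex.sq_norm, Complex.sq_norm, Complex.normSq_apply, Complex.normSq_apply,
      hzre, hzim, hz're, hz'im]
    nlinarith [Real.sin_sq_add_cos_sq xp, Real.sin_sq_add_cos_sq xm]
  have hb2 : β₂ / 2 = Complex.arg (Complex.I + ((A/B : ℝ) : ℂ)) := by rw [hβ₂]; ring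
  have hC : Real.cos (β₂/2) = A / Real.sqrt 2 := by
    rw [hb2]; exact (beta2_cs A B hB hAB).1
  have hS : Real.sin (β₂/2) = B / Real.sqrt 2 := by
    rw [hb2]; exact (beta2_cs A B hB hAB).2
  have ha1 : (β₁ + β₃) / 2 = z.arg := by rw [hβ₁, hβ₃]; ring
  have ha2 : (β₁ - β₃) / 2 = z'.arg := by rw [hβ₁, hβ₃]; ring
  have hxm2 : xm = (α₁ - α₂) / 2 := by rw [hxm, hxp]; ring
  have hca : Real.cos z.arg = z.re / A := Complex.cos_arg hz0
  have hsa : Real.sin z.arg = z.im / A := Complex.sin_arg z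
  have hcb : Real.cos z'.arg = z'.re / B := Complex.cos_arg hz'0
  have hsb : Real.sin z'.arg = z'.im / B := Complex.sin_arg z'
  have h2 : (0:ℝ) < Real.sqrt 2 := by positivity
  rw [RHS_eq, XZX, ZHZ, ha1, ha2, hC, hS, hca, hsa, hcb, hsb, hzre, hzim, hz're, hz'im,
    ← hxp, ← hxm2]
  ext <;> simp only [] <;> field_simp <;> ring
end

section
/- With the notation of the ZX (EU') rule—x⁺ = (α₁+α₂)/2, z = −sin x⁺ + i cos(x⁺ − α₂), z' = cos x⁺ − i sin(x⁺ − α₂), β₁ = arg z + arg z', β₂ = 2 arg(i + |z|/|z'|), β₃ = arg z − arg z', γ = x⁺ − arg z + (π − β₂)/2—the scalar identity e^{i(β₁+β₂+β₃+γ+9π)/2} · (i/√2) · (−√2 e^{iγ/2}) = e^{i(α₁+α₂+π)/2} holds. -/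
open Real Complex

/-- the scalar identity of the translated (EU') rule: with the notation
`x⁺ = (α₁+α₂)/2`, `z = −sin x⁺ + i cos(x⁺−α₂)`, `z' = cos x⁺ − i sin(x⁺−α₂)` (both
nonzero), `β₁ = arg z + arg z'`, `β₂ = 2 arg(i + |z|/|z'|)`, `β₃ = arg z − arg z'`,
`γ = x⁺ − arg z + (π − β₂)/2`, we have
`e^{i(β₁+β₂+β₃+γ+9π)/2} · (i/√2) · (−√2 e^{iγ/2}) = e^{i(α₁+α₂+π)/2}`. -/
theorem ZQ_EU_scalar_identity (α₁ α₂ xp xm β₁ β₂ β₃ γ : ℝ) (z z' : ℂ)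
    (hxp : xp = (α₁ + α₂) / 2) (hxm : xm = xp - α₂)
    (hz : z = -Real.sin xp + Real.cos xm * Complex.I)
    (hz' : z' = Real.cos xp - Real.sin xm * Complex.I)
    (hz0 : z ≠ 0) (hz'0 : z' ≠ 0)
    (hβ₁ : β₁ = z.arg + z'.arg)
    (hβ₂ : β₂ = 2 * Complex.arg (Complex.I + ((‖z‖ / ‖z'‖ : ℝ) : ℂ)))
    (hβ₃ : β₃ = z.arg - z'.arg)
    (hγ : γ = xp - z.arg + (π - β₂) / 2) :
    Complex.exp (((β₁ + β₂ + β₃ + γ + 9 * π) / 2 : ℝ) * Complex.I) *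
        (Complex.I / (Real.sqrt 2 : ℂ)) *
        (-(Real.sqrt 2 : ℂ) * Complex.exp ((γ / 2 : ℝ) * Complex.I)) =
      Complex.exp (((α₁ + α₂ + π) / 2 : ℝ) * Complex.I) := by
  have h2 : (Real.sqrt 2 : ℂ) ≠ 0 := by
    simpa using Real.sqrt_ne_zero'.mpr (by norm_num : (0:ℝ) < 2)
  have hsum : (β₁ + β₂ + β₃ + γ + 9 * π) / 2 + γ / 2 = (α₁ + α₂ + π) / 2 + 9 * π / 2 := by
    subst hβ₁ hβ₂ hβ₃ hγ hxp; ring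
  have e9 : Complex.exp (((9 * π / 2 : ℝ)) * Complex.I) = Complex.I := by
    have : ((9 * π / 2 : ℝ) : ℂ) * Complex.I = (π : ℂ) / 2 * Complex.I + (2 : ℤ) * (2 * π * Complex.I) := by
      push_cast; ring
    rw [this, Complex.exp_add, Complex.exp_int_mul_two_pi_mul_I, mul_one, Complex.exp_mul_I,
      Complex.cos_pi_div_two, Complex.sin_pi_div_two]
    ring
  have key : Complex.exp (((β₁ + β₂ + β₃ + γ + 9 * π) / 2 : ℝ) * Complex.I) *
      Complex.exp ((γ / 2 : ℝ) * Complex.I) =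
      Complex.exp (((α₁ + α₂ + π) / 2 : ℝ) * Complex.I) * Complex.I := by
    rw [← Complex.exp_add]
    have h : ((((β₁ + β₂ + β₃ + γ + 9 * π) / 2 : ℝ)) : ℂ) * Complex.I + ((γ / 2 : ℝ) : ℂ) * Complex.I
        = (((α₁ + α₂ + π) / 2 : ℝ) : ℂ) * Complex.I + ((9 * π / 2 : ℝ) : ℂ) * Complex.I := by
      rw [← add_mul, ← add_mul]
      norm_cast
      rw [hsum]
    rw [h, Complex.exp_add, e9]
  calc Complex.exp (((β₁ + β₂ + β₃ + γ + 9 * π) / 2 : ℝ) * Complex.I) *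
        (Complex.I / (Real.sqrt 2 : ℂ)) *
        (-(Real.sqrt 2 : ℂ) * Complex.exp ((γ / 2 : ℝ) * Complex.I))
      = Complex.exp (((β₁ + β₂ + β₃ + γ + 9 * π) / 2 : ℝ) * Complex.I) *
        Complex.exp ((γ / 2 : ℝ) * Complex.I) * (-Complex.I) := by
        field_simp
    _ = Complex.exp (((α₁ + α₂ + π) / 2 : ℝ) * Complex.I) * Complex.I * (-Complex.I) := by rw [key]
    _ = Complex.exp (((α₁ + α₂ + π) / 2 : ℝ) * Complex.I) := by
        rw [mul_assoc]; simp [Complex.I_mul_I]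
end
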